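/- arXiv:2510.21934 — 2 statements merged into one kernel-verified Lean document; each statement's English description precedes it below -/
import Mathlib

section
/- (Uniform approximation of the hinge objective.) Let F_α(β,τ) = Σ_{i=1}^n w_i·L_α^{(i)}(β,τ) be the CSO objective and F_∞(β,τ) the corresponding hinge objective obtained by replacing φ_α with the hinge loss h(t) = max(t,0). Then for every (β,τ) ∈ ℝ^p × ℝ^{K−1}, 0 ≤ F_α(β,τ) − F_∞(β,τ) ≤ (log 2 / α)·Σ_{i=1}^n w_i·(Σ_{j=1}^{k_i−1} λ_j + Σ_{j=k_i}^{K−1} μ_j). -/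
open RealInnerProductSpace

/-- Softplus with temperature `α`. -/
noncomputable def softplus (α t : ℝ) : ℝ := (1 / α) * Real.log (1 + Real.exp (α * t))

/-- Per-instance loss built from a generic penalty `φ` (softplus or hinge); threshold
index `j ∈ {1,…,K−1}` is represented by `j : Fin (K-1)` with value `(j : ℕ) + 1`. -/
noncomputable def instLoss {p K : ℕ} (φ : ℝ → ℝ) (x : EuclideanSpace ℝ (Fin p)) (k : ℕ)
    (lam mu : Fin (K - 1) → ℝ) (β : EuclideanSpace ℝ (Fin p)) (τ : Fin (K - 1) → ℝ) : ℝ :=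
  ∑ j : Fin (K - 1),
    if (j : ℕ) + 1 < k then lam j * φ (τ j - ⟪β, x⟫)
    else mu j * φ (⟪β, x⟫ - τ j)

lemma sp_bounds (α t : ℝ) (hα : 0 < α) :
    0 ≤ softplus α t - max t 0 ∧ softplus α t - max t 0 ≤ Real.log 2 / α := by
  unfold softplus
  have hm : α * max t 0 = max (α * t) 0 := by
    rcases le_total t 0 with h | h
    · rw [max_eq_right h, max_eq_right (by nlinarith), mul_zero]
    · rw [max_eq_left h, max_eq_left (by nlinarith)]
  set m := max (α * t) 0 with hmdef
  have h1 : Real.exp m ≤ 1 + Real.exp (α * t) := by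
    rcases le_total (α * t) 0 with h | h
    · rw [hmdef, max_eq_right h]
      have := (Real.exp_pos (α * t)).le
      simp [Real.exp_zero]; linarith
    · rw [hmdef, max_eq_left h]
      linarith
  have h2 : 1 + Real.exp (α * t) ≤ 2 * Real.exp m := by
    rcases le_total (α * t) 0 with h | h
    · rw [hmdef, max_eq_right h]
      have : Real.exp (α * t) ≤ 1 := Real.exp_le_one_iff.mpr h
      simp [Real.exp_zero]; linarith
    · rw [hmdef, max_eq_left h]
      have : (1:ℝ) ≤ Real.exp (α * t) := Real.one_le_exp h
      linarith
  have hpos : (0:ℝ) < 1 + Real.exp (α * t) := by positivity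
  have hlow : m ≤ Real.log (1 + Real.exp (α * t)) := by
    calc m = Real.log (Real.exp m) := (Real.log_exp m).symm
    _ ≤ _ := Real.log_le_log (Real.exp_pos m) h1
  have hhigh : Real.log (1 + Real.exp (α * t)) ≤ Real.log 2 + m := by
    calc Real.log (1 + Real.exp (α * t)) ≤ Real.log (2 * Real.exp m) :=
          Real.log_le_log hpos h2
    _ = Real.log 2 + m := by rw [Real.log_mul (by norm_num) (Real.exp_ne_zero m), Real.log_exp]
  have hmt : max t 0 = m / α := by field_simp [← hm]; linear_combination hm
  have hrw : (1 / α) * Real.log (1 + Real.exp (α * t)) - max t 0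
      = (Real.log (1 + Real.exp (α * t)) - m) / α := by rw [hmt]; ring
  rw [hrw]
  constructor
  · apply div_nonneg (by linarith) hα.le
  · exact div_le_div_of_nonneg_right (by linarith) hα.le

/-- with `F_α` the CSO objective and `F_∞` the hinge objective, for every
`(β,τ)`: `0 ≤ F_α(β,τ) − F_∞(β,τ) ≤ (log 2 / α)·Σ_i w_i·(Σ_{j<k_i} λ_j + Σ_{j≥k_i} μ_j)`. -/
theorem cso_hinge_uniform_approx (p K n : ℕ) (hp : 1 ≤ p) (hK : 2 ≤ K)
    (x : Fin n → EuclideanSpace ℝ (Fin p)) (k : Fin n → ℕ)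
    (hk1 : ∀ i, 1 ≤ k i) (hkK : ∀ i, k i ≤ K)
    (w : Fin n → ℝ) (hw : ∀ i, 0 ≤ w i)
    (lam mu : Fin (K - 1) → ℝ) (hlam : ∀ j, 0 ≤ lam j) (hmu : ∀ j, 0 ≤ mu j)
    (α : ℝ) (hα : 0 < α)
    (β : EuclideanSpace ℝ (Fin p)) (τ : Fin (K - 1) → ℝ) :
    0 ≤ (∑ i : Fin n, w i * instLoss (softplus α) (x i) (k i) lam mu β τ) -
        (∑ i : Fin n, w i * instLoss (fun t => max t 0) (x i) (k i) lam mu β τ) ∧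
    (∑ i : Fin n, w i * instLoss (softplus α) (x i) (k i) lam mu β τ) -
        (∑ i : Fin n, w i * instLoss (fun t => max t 0) (x i) (k i) lam mu β τ) ≤
      (Real.log 2 / α) *
        ∑ i : Fin n, w i *
          ((∑ j : Fin (K - 1), if (j : ℕ) + 1 < k i then lam j else 0) +
           (∑ j : Fin (K - 1), if (j : ℕ) + 1 < k i then 0 else mu j)) := by
  have hc : 0 ≤ Real.log 2 / α := div_nonneg (Real.log_nonneg (by norm_num)) hα.le
  -- per-instance bounds
  have inst : ∀ i : Fin n,
      0 ≤ instLoss (softplus α) (x i) (k i) lam mu β τ -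
          instLoss (fun t => max t 0) (x i) (k i) lam mu β τ ∧
      instLoss (softplus α) (x i) (k i) lam mu β τ -
          instLoss (fun t => max t 0) (x i) (k i) lam mu β τ ≤
        (Real.log 2 / α) *
          ((∑ j : Fin (K - 1), if (j : ℕ) + 1 < k i then lam j else 0) +
           (∑ j : Fin (K - 1), if (j : ℕ) + 1 < k i then 0 else mu j)) := by
    intro i
    unfold instLoss
    rw [← Finset.sum_sub_distrib]
    have hcomb : ((∑ j : Fin (K - 1), if (j : ℕ) + 1 < k i then lam j else 0) +
        (∑ j : Fin (K - 1), if (j : ℕ) + 1 < k i then 0 else mu j)) =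
        ∑ j : Fin (K - 1), (if (j : ℕ) + 1 < k i then lam j else mu j) := by
      rw [← Finset.sum_add_distrib]
      apply Finset.sum_congr rfl
      intro j _
      split <;> simp
    rw [hcomb, Finset.mul_sum]
    constructor
    · apply Finset.sum_nonneg
      intro j _
      split
      · rw [← mul_sub]
        exact mul_nonneg (hlam j) (sp_bounds α _ hα).1
      · rw [← mul_sub]
        exact mul_nonneg (hmu j) (sp_bounds α _ hα).1
    · apply Finset.sum_le_sum
      intro j _
      split
      · rw [← mul_sub, mul_comm (Real.log 2 / α)]
        exact mul_le_mul_of_nonneg_left (sp_bounds α _ hα).2 (hlam j)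
      · rw [← mul_sub, mul_comm (Real.log 2 / α)]
        exact mul_le_mul_of_nonneg_left (sp_bounds α _ hα).2 (hmu j)
  rw [← Finset.sum_sub_distrib]
  constructor
  · apply Finset.sum_nonneg
    intro i _
    rw [← mul_sub]
    exact mul_nonneg (hw i) (inst i).1
  · rw [Finset.mul_sum]
    apply Finset.sum_le_sum
    intro i _
    rw [← mul_sub]
    calc w i * (instLoss (softplus α) (x i) (k i) lam mu β τ -
          instLoss (fun t => max t 0) (x i) (k i) lam mu β τ)
        ≤ w i * ((Real.log 2 / α) *
          ((∑ j : Fin (K - 1), if (j : ℕ) + 1 < k i then lam j else 0) +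
           (∑ j : Fin (K - 1), if (j : ℕ) + 1 < k i then 0 else mu j))) :=
          mul_le_mul_of_nonneg_left (inst i).2 (hw i)
    _ = _ := by ring
end

section
/- (Approximation quality of CSO minimizers.) Let C ⊆ ℝ^p × ℝ^{K−1} be nonempty, let F_α be the CSO objective and F_∞ the hinge objective, and set C₀ = Σ_{i=1}^n w_i·(Σ_{j=1}^{k_i−1} λ_j + Σ_{j=k_i}^{K−1} μ_j). If (β*, τ*) ∈ C minimizes F_α over C, then for every (β, τ) ∈ C one has F_∞(β*, τ*) ≤ F_∞(β, τ) + (log 2 / α)·C₀; i.e., any CSO minimizer is within (log 2 / α)·C₀ of the infimum of the hinge objective over C. -/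
open RealInnerProductSpace

lemma hinge_le_softplus {α : ℝ} (hα : 0 < α) (t : ℝ) : max t 0 ≤ softplus α t := by
  unfold softplus
  have h1 : α * t ≤ Real.log (1 + Real.exp (α * t)) := by
    calc α * t = Real.log (Real.exp (α * t)) := (Real.log_exp _).symm
    _ ≤ _ := Real.log_le_log (Real.exp_pos _) (by linarith)
  have h2 : (0:ℝ) ≤ Real.log (1 + Real.exp (α * t)) := by
    have := Real.exp_pos (α * t)
    have : (1:ℝ) ≤ 1 + Real.exp (α * t) := by linarith
    exact Real.log_nonneg this
  rcases le_total t 0 with h | h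
  · rw [max_eq_right h]
    exact mul_nonneg (by positivity) h2
  · rw [max_eq_left h, one_div, inv_mul_eq_div, le_div_iff₀ hα]
    linarith [h1]

lemma softplus_le_hinge_add {α : ℝ} (hα : 0 < α) (t : ℝ) :
    softplus α t ≤ max t 0 + Real.log 2 / α := by
  unfold softplus
  have key : Real.log (1 + Real.exp (α * t)) ≤ max (α * t) 0 + Real.log 2 := by
    have hb : 1 + Real.exp (α * t) ≤ 2 * Real.exp (max (α * t) 0) := by
      rcases le_total t 0 with h | h
      · have h1 : Real.exp (α * t) ≤ 1 := Real.exp_le_one_iff.mpr (by nlinarith)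
        have h2 : (1:ℝ) ≤ Real.exp (max (α * t) 0) := by
          apply Real.one_le_exp; exact le_max_right _ _
        nlinarith
      · have h1 : (1:ℝ) ≤ Real.exp (α * t) := Real.one_le_exp (by positivity)
        have h2 : Real.exp (α * t) ≤ Real.exp (max (α * t) 0) :=
          Real.exp_le_exp.mpr (le_max_left _ _)
        nlinarith
    calc Real.log (1 + Real.exp (α * t))
        ≤ Real.log (2 * Real.exp (max (α * t) 0)) :=
          Real.log_le_log (by positivity) hb
      _ = Real.log 2 + max (α * t) 0 := by
          rw [Real.log_mul (by norm_num) (Real.exp_ne_zero _), Real.log_exp]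
      _ = max (α * t) 0 + Real.log 2 := by ring
  have hmax : max (α * t) 0 = α * max t 0 := by
    rcases le_total t 0 with h | h
    · rw [max_eq_right h, max_eq_right (by nlinarith), mul_zero]
    · rw [max_eq_left h, max_eq_left (by positivity)]
  rw [hmax] at key
  calc (1/α) * Real.log (1 + Real.exp (α * t)) ≤ (1/α) * (α * max t 0 + Real.log 2) := by
        apply mul_le_mul_of_nonneg_left key (by positivity)
    _ = max t 0 + Real.log 2 / α := by field_simp

/-- if `(β*, τ*) ∈ C` minimizes the CSO objective `F_α` over a nonempty
set `C`, then for every `(β, τ) ∈ C`,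
`F_∞(β*, τ*) ≤ F_∞(β, τ) + (log 2 / α)·C₀` with
`C₀ = Σ_i w_i·(Σ_{j<k_i} λ_j + Σ_{j≥k_i} μ_j)`. -/
theorem cso_minimizer_near_hinge_optimum (p K n : ℕ) (hp : 1 ≤ p) (hK : 2 ≤ K)
    (x : Fin n → EuclideanSpace ℝ (Fin p)) (k : Fin n → ℕ)
    (hk1 : ∀ i, 1 ≤ k i) (hkK : ∀ i, k i ≤ K)
    (w : Fin n → ℝ) (hw : ∀ i, 0 ≤ w i)
    (lam mu : Fin (K - 1) → ℝ) (hlam : ∀ j, 0 ≤ lam j) (hmu : ∀ j, 0 ≤ mu j)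
    (α : ℝ) (hα : 0 < α)
    (C : Set (EuclideanSpace ℝ (Fin p) × (Fin (K - 1) → ℝ))) (hC : C.Nonempty)
    (βs : EuclideanSpace ℝ (Fin p)) (τs : Fin (K - 1) → ℝ) (hmem : (βs, τs) ∈ C)
    (hmin : ∀ bt ∈ C,
      (∑ i : Fin n, w i * instLoss (softplus α) (x i) (k i) lam mu βs τs) ≤
      (∑ i : Fin n, w i * instLoss (softplus α) (x i) (k i) lam mu bt.1 bt.2)) :
    ∀ bt ∈ C,
      (∑ i : Fin n, w i * instLoss (fun t => max t 0) (x i) (k i) lam mu βs τs) ≤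
      (∑ i : Fin n, w i * instLoss (fun t => max t 0) (x i) (k i) lam mu bt.1 bt.2) +
        (Real.log 2 / α) *
          ∑ i : Fin n, w i *
            ((∑ j : Fin (K - 1), if (j : ℕ) + 1 < k i then lam j else 0) +
             (∑ j : Fin (K - 1), if (j : ℕ) + 1 < k i then 0 else mu j)) := by
  intro bt hbt
  have hc : 0 ≤ Real.log 2 / α := by
    have := Real.log_nonneg (by norm_num : (1:ℝ) ≤ 2); positivity
  -- Step 1: hinge objective at (βs, τs) ≤ softplus objective at (βs, τs)
  have step1 : (∑ i : Fin n, w i * instLoss (fun t => max t 0) (x i) (k i) lam mu βs τs) ≤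
      (∑ i : Fin n, w i * instLoss (softplus α) (x i) (k i) lam mu βs τs) := by
    apply Finset.sum_le_sum
    intro i _
    apply mul_le_mul_of_nonneg_left _ (hw i)
    unfold instLoss
    apply Finset.sum_le_sum
    intro j _
    split
    · exact mul_le_mul_of_nonneg_left (hinge_le_softplus hα _) (hlam j)
    · exact mul_le_mul_of_nonneg_left (hinge_le_softplus hα _) (hmu j)
  -- Step 3: softplus objective at bt ≤ hinge objective at bt + slack
  have step3 : (∑ i : Fin n, w i * instLoss (softplus α) (x i) (k i) lam mu bt.1 bt.2) ≤
      (∑ i : Fin n, w i * instLoss (fun t => max t 0) (x i) (k i) lam mu bt.1 bt.2) +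
        (Real.log 2 / α) *
          ∑ i : Fin n, w i *
            ((∑ j : Fin (K - 1), if (j : ℕ) + 1 < k i then lam j else 0) +
             (∑ j : Fin (K - 1), if (j : ℕ) + 1 < k i then 0 else mu j)) := by
    rw [Finset.mul_sum, ← Finset.sum_add_distrib]
    apply Finset.sum_le_sum
    intro i _
    have hloss : instLoss (softplus α) (x i) (k i) lam mu bt.1 bt.2 ≤
        instLoss (fun t => max t 0) (x i) (k i) lam mu bt.1 bt.2 +
          (Real.log 2 / α) *
            ((∑ j : Fin (K - 1), if (j : ℕ) + 1 < k i then lam j else 0) +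
             (∑ j : Fin (K - 1), if (j : ℕ) + 1 < k i then 0 else mu j)) := by
      unfold instLoss
      rw [← Finset.sum_add_distrib, Finset.mul_sum, ← Finset.sum_add_distrib]
      apply Finset.sum_le_sum
      intro j _
      split
      · rw [add_zero]
        calc lam j * softplus α (bt.2 j - ⟪bt.1, x i⟫) ≤
            lam j * (max (bt.2 j - ⟪bt.1, x i⟫) 0 + Real.log 2 / α) :=
              mul_le_mul_of_nonneg_left (softplus_le_hinge_add hα _) (hlam j)
          _ = _ := by ring
      · rw [zero_add]
        calc mu j * softplus α (⟪bt.1, x i⟫ - bt.2 j) ≤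
            mu j * (max (⟪bt.1, x i⟫ - bt.2 j) 0 + Real.log 2 / α) :=
              mul_le_mul_of_nonneg_left (softplus_le_hinge_add hα _) (hmu j)
          _ = _ := by ring
    calc w i * instLoss (softplus α) (x i) (k i) lam mu bt.1 bt.2 ≤
        w i * (instLoss (fun t => max t 0) (x i) (k i) lam mu bt.1 bt.2 +
          (Real.log 2 / α) *
            ((∑ j : Fin (K - 1), if (j : ℕ) + 1 < k i then lam j else 0) +
             (∑ j : Fin (K - 1), if (j : ℕ) + 1 < k i then 0 else mu j))) :=
          mul_le_mul_of_nonneg_left hloss (hw i)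
      _ = _ := by ring
  calc (∑ i : Fin n, w i * instLoss (fun t => max t 0) (x i) (k i) lam mu βs τs)
      ≤ (∑ i : Fin n, w i * instLoss (softplus α) (x i) (k i) lam mu βs τs) := step1
    _ ≤ (∑ i : Fin n, w i * instLoss (softplus α) (x i) (k i) lam mu bt.1 bt.2) := hmin bt hbt
    _ ≤ _ := step3
end
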